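/- If G and H are graphs neither of which is complete, then box(G ∨ H) ≥ box(G) + box(H), where G ∨ H denotes the join of G and H. -/
import Mathlib


open SimpleGraph Finset

/-- A representation of `G` as intersection graph of boxes in `ℝ^ℓ`
(products of `ℓ` closed bounded intervals). -/
def BoxRep {V : Type*} (G : SimpleGraph V) (ℓ : ℕ) : Prop :=
  ∃ f : V → Fin ℓ → ℝ × ℝ,
    (∀ v i, (f v i).1 ≤ (f v i).2) ∧
    ∀ u v : V, u ≠ v →
      (G.Adj u v ↔ ∀ i, max (f u i).1 (f v i).1 ≤ min (f u i).2 (f v i).2)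

/-- The boxicity of a graph: the least positive `ℓ` admitting a box representation. -/
noncomputable def boxicity {V : Type*} (G : SimpleGraph V) : ℕ :=
  sInf {ℓ : ℕ | 0 < ℓ ∧ BoxRep G ℓ}

/-- A graph is an interval graph iff it has a box representation in dimension 1. -/
def IsIntervalGraph {V : Type*} (G : SimpleGraph V) : Prop := BoxRep G 1

/-- A graph is not complete. -/
def NotComplete {V : Type*} (G : SimpleGraph V) : Prop := ∃ a b : V, a ≠ b ∧ ¬ G.Adj a b

/-- The circular clique `G_k^d`: vertices `a_0, …, a_{k-1}`, with `a_i ~ a_j`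
iff `d ≤ |i - j| ≤ k - d`. -/
def circularClique (k d : ℕ) : SimpleGraph (Fin k) :=
  SimpleGraph.fromRel (fun i j =>
    d ≤ ((i : ℤ) - (j : ℤ)).natAbs ∧ ((i : ℤ) - (j : ℤ)).natAbs ≤ k - d)

/-- The `G`-generalized join `G[H₁, …, Hₙ]`. -/
def genJoin {n : ℕ} {V : Fin n → Type*} (G : SimpleGraph (Fin n))
    (H : ∀ i, SimpleGraph (V i)) : SimpleGraph (Σ i, V i) :=
  SimpleGraph.fromRel (fun x y =>
    G.Adj x.1 y.1 ∨ ∃ h : x.1 = y.1, (H y.1).Adj (h ▸ x.2) y.2)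

/-- The join `G ∨ H` of two disjoint graphs. -/
def graphJoin {α β : Type*} (G : SimpleGraph α) (H : SimpleGraph β) :
    SimpleGraph (α ⊕ β) :=
  SimpleGraph.fromRel (fun x y =>
    match x, y with
    | .inl a, .inl b => G.Adj a b
    | .inr a, .inr b => H.Adj a b
    | _, _ => True)

/-- The equivalence `x ∼ y ↔ N(x) = N(y)` (equal open neighborhoods). -/
def nbhdSetoid {V : Type*} (G : SimpleGraph V) : Setoid V :=
  ⟨fun x y => G.neighborSet x = G.neighborSet y,
    ⟨fun _ => rfl, Eq.symm, Eq.trans⟩⟩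

/-- The reduced graph of `G`: vertices are the classes of `nbhdSetoid G`,
with `[x] ~ [y]` iff `x ~ y` in `G`. -/
def reducedGraph {V : Type*} (G : SimpleGraph V) :
    SimpleGraph (Quotient (nbhdSetoid G)) :=
  SimpleGraph.fromRel (fun a b =>
    ∃ x y : V, Quotient.mk (nbhdSetoid G) x = a ∧ Quotient.mk (nbhdSetoid G) y = b ∧ G.Adj x y)

/-- The zero-divisor graph of a commutative ring: vertices are the nonzero
zero-divisors, with `x ~ y` iff `x * y = 0`. -/
def zeroDivisorGraph (R : Type*) [CommRing R] :
    SimpleGraph {x : R // x ≠ 0 ∧ ∃ y : R, y ≠ 0 ∧ x * y = 0} :=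
  SimpleGraph.fromRel (fun x y => (x : R) * (y : R) = 0)

/-- Equivalence on a ring: equal annihilators. -/
def annSetoid (R : Type*) [CommRing R] : Setoid R :=
  ⟨fun x y => ∀ r : R, x * r = 0 ↔ y * r = 0,
    ⟨fun _ _ => Iff.rfl, fun h r => (h r).symm, fun h h' r => (h r).trans (h' r)⟩⟩

/-- Vertices of the compressed zero-divisor graph: annihilator classes
other than the class of `0` and the class of `1`. -/
def CompressedVertex (R : Type*) [CommRing R] : Type _ :=
  {c : Quotient (annSetoid R) //
    c ≠ Quotient.mk (annSetoid R) 0 ∧ c ≠ Quotient.mk (annSetoid R) 1}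

/-- The compressed zero-divisor graph `Γ_E(R)`. -/
def compressedZDG (R : Type*) [CommRing R] : SimpleGraph (CompressedVertex R) :=
  SimpleGraph.fromRel (fun c c' =>
    ∃ x y : R, Quotient.mk (annSetoid R) x = c.1 ∧ Quotient.mk (annSetoid R) y = c'.1 ∧ x * y = 0)

/-- The graph of proper divisors of `N` (`1 < d < N`), `d ~ d'` iff `N ∣ d * d'`;
this is the compressed zero-divisor graph of `ℤ_N`. -/
def divisorGraph (N : ℕ) : SimpleGraph {d : ℕ // d ∣ N ∧ 1 < d ∧ d < N} :=
  SimpleGraph.fromRel (fun d e => N ∣ d.1 * e.1)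


section BoxicityJoinAux

/-- Two closed intervals (as pairs) meet. -/
abbrev IMeet (p q : ℝ × ℝ) : Prop := max p.1 q.1 ≤ min p.2 q.2

lemma IMeet.le1 {p q : ℝ × ℝ} (h : IMeet p q) : p.1 ≤ q.2 :=
  le_trans (le_max_left _ _) (h.trans (min_le_right _ _))

lemma IMeet.le2 {p q : ℝ × ℝ} (h : IMeet p q) : q.1 ≤ p.2 :=
  le_trans (le_max_right _ _) (h.trans (min_le_left _ _))

lemma imeet_mk {p q : ℝ × ℝ} (hp : p.1 ≤ p.2) (hq : q.1 ≤ q.2)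
    (h1 : p.1 ≤ q.2) (h2 : q.1 ≤ p.2) : IMeet p q :=
  max_le (le_min hp h1) (le_min h2 hq)

lemma imeet_key {p q r s : ℝ × ℝ} (hp : p.1 ≤ p.2) (hq : q.1 ≤ q.2)
    (hr : r.1 ≤ r.2) (hs : s.1 ≤ s.2)
    (hpr : IMeet p r) (hps : IMeet p s) (hqr : IMeet q r) (hqs : IMeet q s)
    (hrs : ¬ IMeet r s) : IMeet p q := by
  rcases le_or_gt r.1 s.2 with h1 | h1 <;> rcases le_or_gt s.1 r.2 with h2 | h2
  · exact absurd (imeet_mk hr hs h1 h2) hrs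
  all_goals
    refine imeet_mk hp hq ?_ ?_ <;>
      linarith [hpr.le1, hps.le1, hqr.le1, hqs.le1, hpr.le2, hps.le2, hqr.le2, hqs.le2]

lemma boxRep_reindex {V ι : Type*} [Fintype ι] (G : SimpleGraph V) (f : V → ι → ℝ × ℝ)
    (h1 : ∀ v i, (f v i).1 ≤ (f v i).2)
    (h2 : ∀ u v : V, u ≠ v →
      (G.Adj u v ↔ ∀ i, max (f u i).1 (f v i).1 ≤ min (f u i).2 (f v i).2)) :
    BoxRep G (Fintype.card ι) := by
  let e := Fintype.equivFin ι
  refine ⟨fun v j => f v (e.symm j), fun v j => h1 v _, fun u v huv => ?_⟩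
  rw [h2 u v huv]
  exact ⟨fun h j => h _, fun h i => by simpa using h (e i)⟩

lemma boxRep_exists {V : Type*} [Fintype V] (G : SimpleGraph V) :
    ∃ ℓ, 0 < ℓ ∧ BoxRep G ℓ := by
  classical
  let ι := Option {p : V × V // p.1 ≠ p.2 ∧ ¬ G.Adj p.1 p.2}
  let f : V → ι → ℝ × ℝ := fun v i => match i with
    | none => (0, 2)
    | some p => if v = p.1.1 then (0,0) else if v = p.1.2 then (2,2) else (0,2)
  refine ⟨Fintype.card ι, Fintype.card_pos_iff.mpr ⟨none⟩, boxRep_reindex G f ?_ ?_⟩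
  · intro v i
    rcases i with _ | p <;> simp only [f]
    · norm_num
    · split_ifs <;> norm_num
  · intro u v huv
    constructor
    · intro hadj i
      rcases i with _ | p
      · simp only [f]; norm_num
      · rcases p with ⟨⟨a, b⟩, hab, hnadj⟩
        simp only [f]
        split_ifs <;> norm_num <;> subst_vars <;>
          first | exact hnadj hadj | exact hnadj hadj.symm
    · intro h
      by_contra hadj
      have := h (some ⟨(u, v), huv, hadj⟩)
      have e1 : f u (some ⟨(u, v), huv, hadj⟩) = (0, 0) := by simp [f]
      have e2 : f v (some ⟨(u, v), huv, hadj⟩) = (2, 2) := by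
        simp [f, Ne.symm huv]
      rw [e1, e2] at this
      norm_num at this

lemma graphJoin_adj_inl {α β : Type*} (G : SimpleGraph α) (H : SimpleGraph β) (a b : α) :
    (graphJoin G H).Adj (Sum.inl a) (Sum.inl b) ↔ G.Adj a b := by
  simp only [graphJoin, SimpleGraph.fromRel_adj]
  constructor
  · rintro ⟨-, h | h⟩
    · exact h
    · exact h.symm
  · intro h
    exact ⟨by simpa using h.ne, Or.inl h⟩

lemma graphJoin_adj_inr {α β : Type*} (G : SimpleGraph α) (H : SimpleGraph β) (a b : β) :
    (graphJoin G H).Adj (Sum.inr a) (Sum.inr b) ↔ H.Adj a b := by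
  simp only [graphJoin, SimpleGraph.fromRel_adj]
  constructor
  · rintro ⟨-, h | h⟩
    · exact h
    · exact h.symm
  · intro h
    exact ⟨by simpa using h.ne, Or.inl h⟩

lemma graphJoin_adj_cross {α β : Type*} (G : SimpleGraph α) (H : SimpleGraph β) (a : α) (b : β) :
    (graphJoin G H).Adj (Sum.inl a) (Sum.inr b) :=
  (SimpleGraph.fromRel_adj _ _ _).mpr ⟨by simp, Or.inl trivial⟩

end BoxicityJoinAux

/-- If neither `G` nor `H` is complete, then `box(G ∨ H) ≥ box(G) + box(H)`. -/
theorem boxicity_join_ge {α β : Type*} [Fintype α] [Fintype β]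
    (G : SimpleGraph α) (H : SimpleGraph β)
    (hG : NotComplete G) (hH : NotComplete H) :
    boxicity G + boxicity H ≤ boxicity (graphJoin G H) := by
    classical
  obtain ⟨a0, b0, hab0, hGab⟩ := hG
  obtain ⟨c0, d0, hcd0, hHcd⟩ := hH
  obtain ⟨L, hLpos, hLrep⟩ := boxRep_exists (graphJoin G H)
  have hne : {ℓ : ℕ | 0 < ℓ ∧ BoxRep (graphJoin G H) ℓ}.Nonempty := ⟨L, hLpos, hLrep⟩
  set n := boxicity (graphJoin G H) with hn
  have hmem : 0 < n ∧ BoxRep (graphJoin G H) n := Nat.sInf_mem hne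
  obtain ⟨hpos, f, hf1, hf2⟩ := hmem
  let PG : Fin n → Prop := fun i =>
    ∃ a b : α, a ≠ b ∧ ¬ G.Adj a b ∧ ¬ IMeet (f (Sum.inl a) i) (f (Sum.inl b) i)
  let PH : Fin n → Prop := fun i =>
    ∃ c d : β, c ≠ d ∧ ¬ H.Adj c d ∧ ¬ IMeet (f (Sum.inr c) i) (f (Sum.inr d) i)
  let sG : Finset (Fin n) := Finset.univ.filter PG
  let sH : Finset (Fin n) := Finset.univ.filter PH
  have hdisj : Disjoint sG sH := by
    rw [Finset.disjoint_left]
    intro i hiG hiH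
    simp only [sG, sH, Finset.mem_filter, Finset.mem_univ, true_and, PG, PH] at hiG hiH
    obtain ⟨a, b, hab, -, hnab⟩ := hiG
    obtain ⟨c, d, hcd, -, hncd⟩ := hiH
    have hac : IMeet (f (Sum.inl a) i) (f (Sum.inr c) i) :=
      (hf2 _ _ (by simp)).mp (graphJoin_adj_cross G H a c) i
    have had : IMeet (f (Sum.inl a) i) (f (Sum.inr d) i) :=
      (hf2 _ _ (by simp)).mp (graphJoin_adj_cross G H a d) i
    have hbc : IMeet (f (Sum.inl b) i) (f (Sum.inr c) i) :=
      (hf2 _ _ (by simp)).mp (graphJoin_adj_cross G H b c) i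
    have hbd : IMeet (f (Sum.inl b) i) (f (Sum.inr d) i) :=
      (hf2 _ _ (by simp)).mp (graphJoin_adj_cross G H b d) i
    exact hnab (imeet_key (hf1 _ i) (hf1 _ i) (hf1 _ i) (hf1 _ i) hac had hbc hbd hncd)
  have hGne : sG.Nonempty := by
    have hnadj : ¬ (graphJoin G H).Adj (Sum.inl a0) (Sum.inl b0) := by
      rw [graphJoin_adj_inl]; exact hGab
    obtain ⟨i, hi⟩ : ∃ i, ¬ IMeet (f (Sum.inl a0) i) (f (Sum.inl b0) i) := by
      by_contra hcon; push_neg at hcon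
      exact hnadj ((hf2 _ _ (by simp [hab0])).mpr hcon)
    exact ⟨i, by
      simp only [sG, Finset.mem_filter, Finset.mem_univ, true_and, PG]
      exact ⟨a0, b0, hab0, hGab, hi⟩⟩
  have hHne : sH.Nonempty := by
    have hnadj : ¬ (graphJoin G H).Adj (Sum.inr c0) (Sum.inr d0) := by
      rw [graphJoin_adj_inr]; exact hHcd
    obtain ⟨i, hi⟩ : ∃ i, ¬ IMeet (f (Sum.inr c0) i) (f (Sum.inr d0) i) := by
      by_contra hcon; push_neg at hcon
      exact hnadj ((hf2 _ _ (by simp [hcd0])).mpr hcon)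
    exact ⟨i, by
      simp only [sH, Finset.mem_filter, Finset.mem_univ, true_and, PH]
      exact ⟨c0, d0, hcd0, hHcd, hi⟩⟩
  have repG : BoxRep G sG.card := by
    rw [← Fintype.card_coe]
    refine boxRep_reindex G (fun a i => f (Sum.inl a) i.1) (fun a i => hf1 _ _) ?_
    intro a b hab
    constructor
    · intro hadj i
      exact (hf2 (Sum.inl a) (Sum.inl b) (by simp [hab])).mp
        ((graphJoin_adj_inl G H a b).mpr hadj) i.1
    · intro h
      by_contra hadj
      obtain ⟨i, hi⟩ : ∃ i, ¬ IMeet (f (Sum.inl a) i) (f (Sum.inl b) i) := by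
        by_contra hcon; push_neg at hcon
        exact hadj ((graphJoin_adj_inl G H a b).mp ((hf2 _ _ (by simp [hab])).mpr hcon))
      exact hi (h ⟨i, by
        simp only [sG, Finset.mem_filter, Finset.mem_univ, true_and, PG]
        exact ⟨a, b, hab, hadj, hi⟩⟩)
  have repH : BoxRep H sH.card := by
    rw [← Fintype.card_coe]
    refine boxRep_reindex H (fun c i => f (Sum.inr c) i.1) (fun c i => hf1 _ _) ?_
    intro c d hcd
    constructor
    · intro hadj i
      exact (hf2 (Sum.inr c) (Sum.inr d) (by simp [hcd])).mp
        ((graphJoin_adj_inr G H c d).mpr hadj) i.1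
    · intro h
      by_contra hadj
      obtain ⟨i, hi⟩ : ∃ i, ¬ IMeet (f (Sum.inr c) i) (f (Sum.inr d) i) := by
        by_contra hcon; push_neg at hcon
        exact hadj ((graphJoin_adj_inr G H c d).mp ((hf2 _ _ (by simp [hcd])).mpr hcon))
      exact hi (h ⟨i, by
        simp only [sH, Finset.mem_filter, Finset.mem_univ, true_and, PH]
        exact ⟨c, d, hcd, hadj, hi⟩⟩)
  have hGle : boxicity G ≤ sG.card := Nat.sInf_le ⟨Finset.card_pos.mpr hGne, repG⟩
  have hHle : boxicity H ≤ sH.card := Nat.sInf_le ⟨Finset.card_pos.mpr hHne, repH⟩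
  have hsum : sG.card + sH.card ≤ n := by
    rw [← Finset.card_union_of_disjoint hdisj]
    simpa using Finset.card_le_univ (sG ∪ sH)
  omega
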